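/- (Intermediate claim in the proof of Theorem 1, case m ≤ 0.) Assume m ≤ 0 and W_m(n) ≠ 0 for every integer n ≥ −m. Then P(∂_z) : ℂ[[z]] → ℂ[[z]] is surjective and its kernel is a ℂ-vector subspace of ℂ[[z]] of dimension −m. -/

import Mathlib

open PowerSeries

/-- Formal differentiation `∂_z` on `ℂ[[z]]` as a `ℂ`-linear map. -/
noncomputable def dz : PowerSeries ℂ →ₗ[ℂ] PowerSeries ℂ where
  toFun u := PowerSeries.mk fun n => ((n : ℂ) + 1) * PowerSeries.coeff (n + 1) u
  map_add' u v := by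
    ext n
    simp [mul_add]
  map_smul' c u := by
    ext n
    simp
    ring

/-- The order of vanishing at `0` of a formal power series. -/
noncomputable def ordz (g : PowerSeries ℂ) : ℕ := sInf {k : ℕ | PowerSeries.coeff k g ≠ 0}

/-- The operator `P(∂_z) u = Σ_{j∈Λ} a_j · ∂_z^j u`. -/
noncomputable def Pop (Λ : Finset ℕ) (a : ℕ → PowerSeries ℂ) :
    PowerSeries ℂ →ₗ[ℂ] PowerSeries ℂ :=
  ∑ j ∈ Λ, (LinearMap.mulLeft ℂ (a j)).comp (dz ^ j)

/-- The characteristic polynomial `W_q` evaluated at a natural number `n`: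
`W_q(n) = Σ_{j∈Λ, α_j−j=q} a_{j,j+q} · n(n−1)⋯(n−j+1)`. -/
noncomputable def W (Λ : Finset ℕ) (a : ℕ → PowerSeries ℂ) (q : ℤ) (n : ℕ) : ℂ :=
  ∑ j ∈ Λ.filter (fun j => (ordz (a j) : ℤ) - j = q),
    PowerSeries.coeff (ordz (a j)) (a j) * (n.descFactorial j : ℂ)

lemma coeff_dz (n : ℕ) (u : PowerSeries ℂ) :
    coeff n (dz u) = ((n:ℂ)+1) * coeff (n+1) u := by
  simp [dz]

lemma coeff_dz_pow (j : ℕ) (l : ℕ) (u : PowerSeries ℂ) :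
    coeff l ((dz ^ j) u) = ((l + j).descFactorial j : ℂ) * coeff (l + j) u := by
  induction j generalizing l with
  | zero => simp
  | succ j ih =>
    rw [pow_succ', Module.End.mul_apply, coeff_dz, ih]
    rw [show l + (j+1) = (l+1)+j by ring, show (l+1)+j = (l+j)+1 by ring,
      Nat.descFactorial_succ, show l+j+1-j = l+1 by omega]
    push_cast
    ring

lemma coeff_ordz_ne (g : PowerSeries ℂ) (hg : g ≠ 0) : coeff (ordz g) g ≠ 0 := by
  have hne : {k : ℕ | PowerSeries.coeff k g ≠ 0}.Nonempty := by
    by_contra h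
    apply hg
    ext k
    have h2 := Set.not_nonempty_iff_eq_empty.mp h
    have : k ∉ {k : ℕ | PowerSeries.coeff k g ≠ 0} := by simp [h2]
    simpa using this
  exact Nat.sInf_mem hne

lemma coeff_lt_ordz (g : PowerSeries ℂ) (k : ℕ) (hk : k < ordz g) : coeff k g = 0 := by
  by_contra h
  have : k ∈ {k : ℕ | PowerSeries.coeff k g ≠ 0} := h
  have := Nat.sInf_le this
  unfold ordz at hk
  omega

lemma coeff_Pop (Λ : Finset ℕ) (a : ℕ → PowerSeries ℂ) (p : ℕ) (u : PowerSeries ℂ) :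
    coeff p (Pop Λ a u) =
      ∑ j ∈ Λ, ∑ kl ∈ Finset.HasAntidiagonal.antidiagonal p,
        coeff kl.1 (a j) * (((kl.2 + j).descFactorial j : ℂ) * coeff (kl.2 + j) u) := by
  rw [Pop, LinearMap.sum_apply, map_sum]
  refine Finset.sum_congr rfl fun j hj => ?_
  rw [LinearMap.comp_apply, LinearMap.mulLeft_apply, coeff_mul]
  exact Finset.sum_congr rfl fun kl _ => by rw [coeff_dz_pow]

lemma coeff_Pop_top (Λ : Finset ℕ) (a : ℕ → PowerSeries ℂ) (m : ℤ) (hm0 : m ≤ 0)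
    (hα : ∀ j ∈ Λ, m ≤ (ordz (a j) : ℤ) - j)
    (p : ℕ) (u : PowerSeries ℂ)
    (h0 : ∀ i < p + (-m).toNat, coeff i u = 0) :
    coeff p (Pop Λ a u) = W Λ a m (p + (-m).toNat) * coeff (p + (-m).toNat) u := by
  set d : ℕ := (-m).toNat with hdd
  have hd : (d : ℤ) = -m := Int.toNat_of_nonneg (by omega)
  rw [coeff_Pop]
  have key : ∀ j ∈ Λ,
      (∑ kl ∈ Finset.HasAntidiagonal.antidiagonal p,
        coeff kl.1 (a j) * (((kl.2 + j).descFactorial j : ℂ) * coeff (kl.2 + j) u)) =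
      (if (ordz (a j) : ℤ) - j = m then
        coeff (ordz (a j)) (a j) * (((p+d).descFactorial j : ℂ)) else 0) * coeff (p+d) u := by
    intro j hj
    set α : ℕ := ordz (a j) with hαdef
    have hαj : m ≤ (α : ℤ) - j := hα j hj
    by_cases hc : (α : ℤ) - j = m
    · have hjα : j = α + d := by omega
      by_cases hαp : α ≤ p
      · rw [if_pos hc]
        refine Finset.sum_eq_single_of_mem (α, p - α) ?_ ?_ |>.trans ?_
        · simp [Finset.HasAntidiagonal.mem_antidiagonal]; omega
        · rintro ⟨k, l⟩ hkl hne
          rw [Finset.HasAntidiagonal.mem_antidiagonal] at hkl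
          simp only at *
          rcases lt_or_ge k α with hk | hk
          · rw [coeff_lt_ordz (a j) k hk]; ring
          · have hkα : α < k := by
              rcases eq_or_lt_of_le hk with h | h
              · exact absurd (by simp [← h]; omega : (k, l) = (α, p - α)) hne
              · exact h
            have : l + j < p + d := by omega
            rw [h0 _ this]; ring
        · have : p - α + j = p + d := by omega
          rw [this]; ring
      · rw [if_pos hc]
        have hdf : (p+d).descFactorial j = 0 :=
          Nat.descFactorial_eq_zero_iff_lt.mpr (by omega)
        rw [Finset.sum_eq_zero, hdf]
        · push_cast; ring
        · rintro ⟨k, l⟩ hkl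
          rw [Finset.HasAntidiagonal.mem_antidiagonal] at hkl
          simp only
          rw [coeff_lt_ordz (a j) k (by omega)]; ring
    · rw [if_neg hc, Finset.sum_eq_zero, zero_mul]
      rintro ⟨k, l⟩ hkl
      rw [Finset.HasAntidiagonal.mem_antidiagonal] at hkl
      simp only
      rcases lt_or_ge k α with hk | hk
      · rw [coeff_lt_ordz (a j) k hk]; ring
      · have : l + j < p + d := by omega
        rw [h0 _ this]; ring
  rw [Finset.sum_congr rfl key, ← Finset.sum_mul, W, ← Finset.sum_filter]

noncomputable def solF (Λ : Finset ℕ) (a : ℕ → PowerSeries ℂ) (m : ℤ)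
    (f : PowerSeries ℂ) (v : ℕ → ℂ) (n : ℕ) : ℂ :=
  if n < (-m).toNat then v n
  else (coeff (n - (-m).toNat) f -
      coeff (n - (-m).toNat)
        (Pop Λ a (PowerSeries.mk fun i => if h : i < n then solF Λ a m f v i else 0)))
    / W Λ a m n
termination_by n

lemma exists_sol (Λ : Finset ℕ) (a : ℕ → PowerSeries ℂ) (m : ℤ) (hm0 : m ≤ 0)
    (hα : ∀ j ∈ Λ, m ≤ (ordz (a j) : ℤ) - j)
    (hW : ∀ n : ℕ, -m ≤ (n : ℤ) → W Λ a m n ≠ 0)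
    (f : PowerSeries ℂ) (v : ℕ → ℂ) :
    ∃ u : PowerSeries ℂ, Pop Λ a u = f ∧ ∀ i < (-m).toNat, coeff i u = v i := by
  set d : ℕ := (-m).toNat with hdd
  have hd : (d : ℤ) = -m := Int.toNat_of_nonneg (by omega)
  set U : PowerSeries ℂ := PowerSeries.mk (solF Λ a m f v) with hU
  refine ⟨U, ?_, ?_⟩
  · ext p
    set n : ℕ := p + d with hn
    set prev : PowerSeries ℂ :=
      PowerSeries.mk (fun i => if h : i < n then solF Λ a m f v i else 0) with hprev
    have hagree : ∀ i < p + d, coeff i (U - prev) = 0 := by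
      intro i hi
      simp only [map_sub, hU, hprev, coeff_mk, dif_pos (show i < n from hi), sub_self]
    have htop := coeff_Pop_top Λ a m hm0 hα p (U - prev) hagree
    have hWn : W Λ a m n ≠ 0 := hW n (by omega)
    have hUn : coeff n U = (coeff p f - coeff p (Pop Λ a prev)) / W Λ a m n := by
      rw [hU, coeff_mk, solF, if_neg (by omega : ¬ n < d)]
      have : n - d = p := by omega
      rw [this]
    have hprevn : coeff n prev = 0 := by
      rw [hprev, coeff_mk, dif_neg (by omega)]
    rw [map_sub, map_sub, map_sub, hprevn, hUn] at htop
    simp only [← hdd, ← hn, sub_zero] at htop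
    have : coeff p (Pop Λ a U) =
        coeff p (Pop Λ a prev) +
          W Λ a m n * ((coeff p f - coeff p (Pop Λ a prev)) / W Λ a m n) := by
      linear_combination htop
    rw [this, mul_div_cancel₀ _ hWn]
    ring
  · intro i hi
    rw [hU, coeff_mk, solF, if_pos hi]

lemma ker_zero (Λ : Finset ℕ) (a : ℕ → PowerSeries ℂ) (m : ℤ) (hm0 : m ≤ 0)
    (hα : ∀ j ∈ Λ, m ≤ (ordz (a j) : ℤ) - j)
    (hW : ∀ n : ℕ, -m ≤ (n : ℤ) → W Λ a m n ≠ 0)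
    (u : PowerSeries ℂ) (h0 : ∀ i < (-m).toNat, coeff i u = 0)
    (hPu : Pop Λ a u = 0) : u = 0 := by
  set d : ℕ := (-m).toNat with hdd
  have hd : (d : ℤ) = -m := Int.toNat_of_nonneg (by omega)
  have main : ∀ n : ℕ, coeff n u = 0 := by
    intro n
    induction n using Nat.strong_induction_on with
    | _ n ih =>
      by_cases hn : n < d
      · exact h0 n hn
      · set p : ℕ := n - d with hp
        have hpd : p + d = n := by omega
        have htop := coeff_Pop_top Λ a m hm0 hα p u (by rw [hpd]; exact fun i hi => ih i hi)
        rw [hPu, map_zero, hpd] at htop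
        have hWn : W Λ a m n ≠ 0 := hW n (by omega)
        exact (mul_eq_zero.mp htop.symm).resolve_left hWn
  ext k
  simp [main k]

/-- Intermediate claim in the proof of Theorem 1, case `m ≤ 0`:
if `m ≤ 0` and `W_m(n) ≠ 0` for every integer `n ≥ −m`, then `P(∂_z)` is surjective
on `ℂ[[z]]` and its kernel is a `ℂ`-subspace of dimension `−m`. -/
theorem statement1 (Λ : Finset ℕ) (hΛ : Λ.Nonempty) (a : ℕ → PowerSeries ℂ)
    (ha : ∀ j ∈ Λ, a j ≠ 0)
    (m : ℤ) (hm : m = Λ.inf' hΛ (fun j => (ordz (a j) : ℤ) - j))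
    (hm0 : m ≤ 0)
    (hW : ∀ n : ℕ, -m ≤ (n : ℤ) → W Λ a m n ≠ 0) :
    Function.Surjective (Pop Λ a) ∧
      FiniteDimensional ℂ (LinearMap.ker (Pop Λ a)) ∧
      (Module.finrank ℂ (LinearMap.ker (Pop Λ a)) : ℤ) = -m := by
  have hα : ∀ j ∈ Λ, m ≤ (ordz (a j) : ℤ) - j := by
    intro j hj
    rw [hm]
    exact Finset.inf'_le _ hj
  set d : ℕ := (-m).toNat with hdd
  have hd : (d : ℤ) = -m := Int.toNat_of_nonneg (by omega)
  have hsurj : Function.Surjective (Pop Λ a) := by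
    intro f
    obtain ⟨u, hu, -⟩ := exists_sol Λ a m hm0 hα hW f 0
    exact ⟨u, hu⟩
  refine ⟨hsurj, ?_⟩
  let φ : LinearMap.ker (Pop Λ a) →ₗ[ℂ] (Fin d → ℂ) :=
    { toFun := fun u i => coeff i u.val
      map_add' := by intro u v; funext i; simp
      map_smul' := by intro c u; funext i; simp }
  have hφbij : Function.Bijective φ := by
    constructor
    · intro u v huv
      apply Subtype.ext
      have h0 : ∀ i < d, coeff i (u.val - v.val) = 0 := by
        intro i hi
        have := congrFun huv ⟨i, hi⟩
        simp only [φ, LinearMap.coe_mk, AddHom.coe_mk] at this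
        simp [map_sub, this]
      have hP : Pop Λ a (u.val - v.val) = 0 := by
        rw [map_sub, u.prop, v.prop, sub_zero]
      exact sub_eq_zero.mp (ker_zero Λ a m hm0 hα hW _ h0 hP)
    · intro w
      obtain ⟨u, hu, hcoef⟩ := exists_sol Λ a m hm0 hα hW 0
        (fun i => if h : i < d then w ⟨i, h⟩ else 0)
      refine ⟨⟨u, by simpa [LinearMap.mem_ker] using hu⟩, ?_⟩
      funext i
      have := hcoef i.val i.isLt
      simp only [φ, LinearMap.coe_mk, AddHom.coe_mk]
      rw [this, dif_pos i.isLt]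
  let e : LinearMap.ker (Pop Λ a) ≃ₗ[ℂ] (Fin d → ℂ) := LinearEquiv.ofBijective φ hφbij
  have hfin : FiniteDimensional ℂ (LinearMap.ker (Pop Λ a)) :=
    Module.Finite.equiv e.symm
  refine ⟨hfin, ?_⟩
  rw [e.finrank_eq, Module.finrank_fin_fun, hd]
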